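/- arXiv:1608.06663 — 3 statements merged into one kernel-verified Lean document; each statement's English description precedes it below -/
import Mathlib

section
/- (Sandwich variance formula.) The variance of the misspecified MLE satisfies Var(θ̂_n) = (2 (θ†)² / n) · (1 − ([J]/(T θ†))²) + O(n^{-2}) as n → ∞; that is, there exist a constant C and N such that for all n ≥ N, |Var(θ̂_n) − (2(θ†)²/n)(1 − ([J]/(Tθ†))²)| ≤ C n^{-2}. -/
open MeasureTheory ProbabilityTheory Filter Real Set
open scoped NNReal ENNReal


lemma integrable_pow_mul_exp_neg_mul_sq {b : ℝ} (hb : 0 < b) (k : ℕ) :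
    Integrable (fun x : ℝ => x ^ k * Real.exp (-b * x ^ 2)) := by
  have h := integrable_rpow_mul_exp_neg_mul_sq hb (s := (k : ℝ))
    (lt_of_lt_of_le neg_one_lt_zero (Nat.cast_nonneg k))
  simpa [Real.rpow_natCast] using h

lemma integral_full_eq_two_Ioi {f : ℝ → ℝ} (hf : Integrable f) (heven : ∀ x, f (-x) = f x) :
    ∫ x, f x = 2 * ∫ x in Ioi (0:ℝ), f x := by
  have h1 : ∫ x in Iic (0:ℝ), f x = ∫ x in Ioi (0:ℝ), f x := by
    have := integral_comp_neg_Ioi (c := (0:ℝ)) f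
    rw [neg_zero] at this
    rw [← this]
    exact integral_congr_ae (Filter.Eventually.of_forall fun x => heven x)
  rw [← intervalIntegral.integral_Iic_add_Ioi (hf.integrableOn) (hf.integrableOn), h1]
  ring

lemma integral_odd_eq_zero {f : ℝ → ℝ} (hodd : ∀ x, f (-x) = -f x) :
    ∫ x, f x = 0 := by
  have h := integral_neg_eq_self f (volume : Measure ℝ)
  simp only [hodd, integral_neg] at h
  linarith

lemma integral_Ioi_pow_mul_exp_neg_mul_sq {b : ℝ} (hb : 0 < b) (k : ℕ) :
    ∫ x in Ioi (0:ℝ), x ^ k * Real.exp (-b * x ^ 2)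
      = b ^ (-((k:ℝ) + 1) / 2) * (1 / 2) * Real.Gamma (((k:ℝ) + 1) / 2) := by
  have h := integral_rpow_mul_exp_neg_mul_rpow (p := (2:ℝ)) (q := (k:ℝ)) (b := b)
    (by norm_num) (lt_of_lt_of_le neg_one_lt_zero (Nat.cast_nonneg k)) hb
  rw [← h]
  refine setIntegral_congr_fun measurableSet_Ioi (fun x hx => ?_)
  rw [Real.rpow_natCast, show (2:ℝ) = ((2:ℕ):ℝ) by norm_num, Real.rpow_natCast]


lemma integral_sq_mul_exp_neg_mul_sq {b : ℝ} (hb : 0 < b) :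
    ∫ x : ℝ, x ^ 2 * Real.exp (-b * x ^ 2) = Real.sqrt (π / b) * (2 * b)⁻¹ := by
  rw [integral_full_eq_two_Ioi (integrable_pow_mul_exp_neg_mul_sq hb 2)
    (fun x => by ring_nf), integral_Ioi_pow_mul_exp_neg_mul_sq hb 2]
  have h1 : (((2:ℕ):ℝ) + 1) / 2 = 1/2 + 1 := by norm_num
  rw [h1, Real.Gamma_add_one (by norm_num), Real.Gamma_one_half_eq]
  have h2 : b ^ (-(((2:ℕ):ℝ) + 1) / 2) = (Real.sqrt b * b)⁻¹ := by
    rw [show (-(((2:ℕ):ℝ) + 1) / 2) = -(1/2 + 1) by norm_num, Real.rpow_neg hb.le,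
      Real.rpow_add hb, Real.rpow_one, ← Real.sqrt_eq_rpow]
  rw [h2, Real.sqrt_div pi_pos.le]
  have hsb : Real.sqrt b ≠ 0 := ne_of_gt (Real.sqrt_pos.mpr hb)
  field_simp

lemma integral_pow4_mul_exp_neg_mul_sq {b : ℝ} (hb : 0 < b) :
    ∫ x : ℝ, x ^ 4 * Real.exp (-b * x ^ 2) = Real.sqrt (π / b) * (3 * (4 * b ^ 2)⁻¹) := by
  rw [integral_full_eq_two_Ioi (integrable_pow_mul_exp_neg_mul_sq hb 4)
    (fun x => by ring_nf), integral_Ioi_pow_mul_exp_neg_mul_sq hb 4]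
  have h1 : (((4:ℕ):ℝ) + 1) / 2 = (1/2 + 1) + 1 := by norm_num
  rw [h1, Real.Gamma_add_one (by norm_num), Real.Gamma_add_one (by norm_num),
    Real.Gamma_one_half_eq]
  have h2 : b ^ (-(((4:ℕ):ℝ) + 1) / 2) = (Real.sqrt b * b ^ 2)⁻¹ := by
    rw [show (-(((4:ℕ):ℝ) + 1) / 2) = -(1/2 + 2) by norm_num, Real.rpow_neg hb.le,
      Real.rpow_add hb, ← Real.sqrt_eq_rpow, show ((2:ℝ):ℝ) = ((2:ℕ):ℝ) by norm_num,
      Real.rpow_natCast]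
  rw [h2, Real.sqrt_div pi_pos.le]
  have hsb : Real.sqrt b ≠ 0 := ne_of_gt (Real.sqrt_pos.mpr hb)
  field_simp
  ring

lemma integral_fun_gaussianReal {m : ℝ} {v : ℝ≥0} (hv : v ≠ 0) (f : ℝ → ℝ) :
    ∫ x, f x ∂(gaussianReal m v) = ∫ x, gaussianPDFReal m v x * f x := by
  rw [gaussianReal_of_var_ne_zero m hv]
  rw [show (gaussianPDF m v) = (fun x => ((Real.toNNReal (gaussianPDFReal m v x) : ℝ≥0) : ℝ≥0∞))
      from rfl,
    integral_withDensity_eq_integral_smul ((measurable_gaussianPDFReal m v).real_toNNReal) f]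
  congr 1
  funext x
  rw [NNReal.smul_def, Real.coe_toNNReal _ (gaussianPDFReal_nonneg m v x), smul_eq_mul]

lemma integrable_shift_pow_mul_exp {b : ℝ} (hb : 0 < b) (m : ℝ) (k : ℕ) :
    Integrable (fun x : ℝ => (x + m)^k * Real.exp (-b * x^2)) := by
  have h : (fun x : ℝ => (x + m)^k * Real.exp (-b * x^2))
      = fun x => ∑ j ∈ Finset.range (k+1),
          (m^(k-j) * (k.choose j)) * (x^j * Real.exp (-b*x^2)) := by
    funext x; rw [add_pow, Finset.sum_mul]; congr 1 with j; ring
  rw [h]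
  exact integrable_finset_sum _ (fun j _ => ((integrable_pow_mul_exp_neg_mul_sq hb j).const_mul _))

lemma integrable_pow_gaussianReal {m : ℝ} {v : ℝ≥0} (hv : v ≠ 0) (k : ℕ) :
    Integrable (fun x => x ^ k) (gaussianReal m v) := by
  have hvpos : (0:ℝ) < (v:ℝ) := by
    have := pos_iff_ne_zero.mpr hv
    exact_mod_cast this
  have hb : (0:ℝ) < (2*(v:ℝ))⁻¹ := by positivity
  rw [gaussianReal_of_var_ne_zero m hv,
    integrable_withDensity_iff (measurable_gaussianPDF m v)
      (ae_of_all _ fun x => ENNReal.ofReal_lt_top)]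
  have h1 : (fun x : ℝ => x ^ k * (gaussianPDF m v x).toReal)
      = fun x => x ^ k * gaussianPDFReal m v x := by
    funext x
    rw [gaussianPDF, ENNReal.toReal_ofReal (gaussianPDFReal_nonneg m v x)]
  rw [h1]
  have h2 : Integrable (fun x : ℝ => (x + m) ^ k * gaussianPDFReal m v (x + m)) := by
    have h3 : (fun x : ℝ => (x + m) ^ k * gaussianPDFReal m v (x + m))
        = fun x => (√(2 * π * v))⁻¹ * ((x + m)^k * Real.exp (-(2*(v:ℝ))⁻¹ * x^2)) := by
      funext x
      rw [gaussianPDFReal]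
      rw [show (-(x + m - m)^2 / (2 * (v:ℝ))) = -(2*(v:ℝ))⁻¹ * x^2 by
        rw [div_eq_mul_inv]; ring]
      ring
    rw [h3]
    exact (integrable_shift_pow_mul_exp hb m k).const_mul _
  have := h2.comp_sub_right m
  simpa using this

lemma integral_pow_gaussianReal {m : ℝ} {v : ℝ≥0} (hv : v ≠ 0) (k : ℕ) :
    ∫ x, x ^ k ∂(gaussianReal m v)
      = (√(2 * π * v))⁻¹ * ∑ j ∈ Finset.range (k+1),
          m^(k-j) * (k.choose j) * ∫ x : ℝ, x^j * Real.exp (-(2*(v:ℝ))⁻¹ * x^2) := by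
  have hvpos : (0:ℝ) < (v:ℝ) := by
    have := pos_iff_ne_zero.mpr hv
    exact_mod_cast this
  have hb : (0:ℝ) < (2*(v:ℝ))⁻¹ := by positivity
  rw [integral_fun_gaussianReal hv]
  have hshift : ∫ y : ℝ, gaussianPDFReal m v (y + m) * (y + m)^k
      = ∫ x : ℝ, gaussianPDFReal m v x * x^k :=
    integral_add_right_eq_self (fun x => gaussianPDFReal m v x * x ^ k) m
  rw [← hshift]
  have h3 : (fun y : ℝ => gaussianPDFReal m v (y + m) * (y + m)^k)
      = fun y => ∑ j ∈ Finset.range (k+1), (√(2 * π * v))⁻¹ *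
          (m^(k-j) * (k.choose j) * (y^j * Real.exp (-(2*(v:ℝ))⁻¹ * y^2))) := by
    funext y
    rw [gaussianPDFReal, show (-(y + m - m)^2 / (2 * (v:ℝ))) = -(2*(v:ℝ))⁻¹ * y^2 by
        rw [div_eq_mul_inv]; ring,
      add_pow, Finset.mul_sum]
    congr 1 with j
    ring
  rw [h3, integral_finset_sum _ (fun j _ =>
    (((integrable_pow_mul_exp_neg_mul_sq hb j).const_mul _).const_mul _)), Finset.mul_sum]
  congr 1 with j
  rw [integral_const_mul, integral_const_mul]

lemma integral_sq_gaussianReal {m : ℝ} {v : ℝ≥0} (hv : v ≠ 0) :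
    ∫ x, x ^ 2 ∂(gaussianReal m v) = (v:ℝ) + m^2 := by
  have hvpos : (0:ℝ) < (v:ℝ) := by
    have := pos_iff_ne_zero.mpr hv
    exact_mod_cast this
  set b : ℝ := (2*(v:ℝ))⁻¹ with hbdef
  have hb : (0:ℝ) < b := by positivity
  rw [integral_pow_gaussianReal hv 2, Finset.sum_range_succ, Finset.sum_range_succ,
    Finset.sum_range_succ, Finset.sum_range_zero]
  have e0 : ∫ x : ℝ, x^0 * Real.exp (-b*x^2) = √(π/b) := by
    simpa using integral_gaussian b
  have e1 : ∫ x : ℝ, x^1 * Real.exp (-b*x^2) = 0 :=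
    integral_odd_eq_zero (fun x => by ring_nf)
  have e2 := integral_sq_mul_exp_neg_mul_sq hb
  rw [e0, e1, e2]
  have hπb : π / b = 2*π*(v:ℝ) := by rw [hbdef]; field_simp
  rw [hπb]
  have h2b : 2*b = (v:ℝ)⁻¹ := by rw [hbdef]; field_simp
  rw [h2b, inv_inv]
  have hs : (0:ℝ) < √(2*π*(v:ℝ)) := Real.sqrt_pos.mpr (by positivity)
  field_simp
  norm_num [Nat.choose]
  ring

lemma integral_pow4_gaussianReal {m : ℝ} {v : ℝ≥0} (hv : v ≠ 0) :
    ∫ x, x ^ 4 ∂(gaussianReal m v) = 3*(v:ℝ)^2 + 6*(v:ℝ)*m^2 + m^4 := by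
  have hvpos : (0:ℝ) < (v:ℝ) := by
    have := pos_iff_ne_zero.mpr hv
    exact_mod_cast this
  set b : ℝ := (2*(v:ℝ))⁻¹ with hbdef
  have hb : (0:ℝ) < b := by positivity
  rw [integral_pow_gaussianReal hv 4, Finset.sum_range_succ, Finset.sum_range_succ,
    Finset.sum_range_succ, Finset.sum_range_succ, Finset.sum_range_succ, Finset.sum_range_zero]
  have e0 : ∫ x : ℝ, x^0 * Real.exp (-b*x^2) = √(π/b) := by
    simpa using integral_gaussian b
  have e1 : ∫ x : ℝ, x^1 * Real.exp (-b*x^2) = 0 :=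
    integral_odd_eq_zero (fun x => by ring_nf)
  have e2 := integral_sq_mul_exp_neg_mul_sq hb
  have e3 : ∫ x : ℝ, x^3 * Real.exp (-b*x^2) = 0 :=
    integral_odd_eq_zero (fun x => by ring_nf)
  have e4 := integral_pow4_mul_exp_neg_mul_sq hb
  rw [e0, e1, e2, e3, e4]
  have hπb : π / b = 2*π*(v:ℝ) := by rw [hbdef]; field_simp
  rw [hπb]
  have h2b : 2*b = (v:ℝ)⁻¹ := by rw [hbdef]; field_simp
  have h4b : 4*b^2 = ((v:ℝ)^2)⁻¹ := by rw [hbdef]; field_simp; ring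
  rw [h2b, h4b, inv_inv, inv_inv]
  have hs : (0:ℝ) < √(2*π*(v:ℝ)) := Real.sqrt_pos.mpr (by positivity)
  norm_num [Nat.choose]
  field_simp
  ring

lemma memℒp_sq_gaussianReal {m : ℝ} {v : ℝ≥0} (hv : v ≠ 0) :
    MemLp (fun x : ℝ => x ^ 2) 2 (gaussianReal m v) := by
  refine (memLp_two_iff_integrable_sq
    ((continuous_pow 2).aestronglyMeasurable)).mpr ?_
  have h4 := integrable_pow_gaussianReal (m := m) hv 4
  refine h4.congr (Filter.Eventually.of_forall fun x => ?_)
  ring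

lemma variance_sq_gaussianReal {m : ℝ} {v : ℝ≥0} (hv : v ≠ 0) :
    variance (fun x : ℝ => x ^ 2) (gaussianReal m v) = 2*(v:ℝ)^2 + 4*m^2*(v:ℝ) := by
  rw [variance_eq_sub (memℒp_sq_gaussianReal hv)]
  have heq : ((fun x : ℝ => x ^ 2) ^ 2) = fun x : ℝ => x ^ 4 := by
    funext x; simp [pow_mul]; ring
  rw [heq, integral_pow4_gaussianReal hv, integral_sq_gaussianReal hv]
  ring

lemma variance_comp_sq {Ω : Type*} [MeasurableSpace Ω] (P : Measure Ω) [IsProbabilityMeasure P]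
    {X : Ω → ℝ} (hX : Measurable X) {m : ℝ} {v : ℝ≥0} (hv : v ≠ 0)
    (hmap : P.map X = gaussianReal m v) :
    variance (fun ω => (X ω) ^ 2) P = 2*(v:ℝ)^2 + 4*m^2*(v:ℝ) := by
  have hsm2 : AEStronglyMeasurable (fun x : ℝ => x ^ 2) (P.map X) :=
    (continuous_pow 2).aestronglyMeasurable
  have hsm4 : AEStronglyMeasurable (fun x : ℝ => x ^ 4) (P.map X) :=
    (continuous_pow 4).aestronglyMeasurable
  have hmem : MemLp (fun x : ℝ => x ^ 2) 2 (P.map X) := by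
    rw [hmap]; exact memℒp_sq_gaussianReal hv
  have hmemΩ : MemLp (fun ω => (X ω) ^ 2) 2 P :=
    (memLp_map_measure_iff hsm2 hX.aemeasurable).mp hmem
  rw [variance_eq_sub hmemΩ]
  have i2 : ∫ x, x ^ 2 ∂(P.map X) = ∫ ω, (X ω) ^ 2 ∂P :=
    integral_map hX.aemeasurable hsm2
  have i4 : ∫ x, x ^ 4 ∂(P.map X) = ∫ ω, (X ω) ^ 4 ∂P :=
    integral_map hX.aemeasurable hsm4
  have heq : ((fun ω => (X ω) ^ 2) ^ 2) = fun ω => (X ω) ^ 4 := by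
    funext ω; simp [pow_mul]; ring
  rw [heq, ← i4, ← i2, hmap, integral_pow4_gaussianReal hv, integral_sq_gaussianReal hv]
  ring

lemma memℒp_comp_sq {Ω : Type*} [MeasurableSpace Ω] (P : Measure Ω) [IsProbabilityMeasure P]
    {X : Ω → ℝ} (hX : Measurable X) {m : ℝ} {v : ℝ≥0} (hv : v ≠ 0)
    (hmap : P.map X = gaussianReal m v) :
    MemLp (fun ω => (X ω) ^ 2) 2 P := by
  have hsm2 : AEStronglyMeasurable (fun x : ℝ => x ^ 2) (P.map X) :=
    (continuous_pow 2).aestronglyMeasurable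
  have hmem : MemLp (fun x : ℝ => x ^ 2) 2 (P.map X) := by
    rw [hmap]; exact memℒp_sq_gaussianReal hv
  exact (memLp_map_measure_iff hsm2 hX.aemeasurable).mp hmem

lemma sum_jump {n K : ℕ} (jdx : Fin K → Fin n) (hinj : Function.Injective jdx)
    (μ : Fin n → ℝ) (c : Fin K → ℝ) (hj : ∀ k, μ (jdx k) = c k)
    (h0 : ∀ i, i ∉ Set.range jdx → μ i = 0)
    (g : ℝ → ℝ) (hg : g 0 = 0) :
    ∑ i, g (μ i) = ∑ k, g (c k) := by
  calc ∑ i : Fin n, g (μ i) = ∑ i ∈ Finset.univ.image jdx, g (μ i) := by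
        refine (Finset.sum_subset (Finset.subset_univ _) (fun i _ hi => ?_)).symm
        rw [h0 i (fun ⟨k, hk⟩ => hi (Finset.mem_image.mpr ⟨k, Finset.mem_univ k, hk⟩)), hg]
    _ = ∑ k, g (μ (jdx k)) := Finset.sum_image (fun x _ y _ h => hinj h)
    _ = ∑ k, g (c k) := by simp [hj]



/-- **Sandwich variance formula for the misspecified MLE.**
With `θ̂_n = T⁻¹ ∑_i D_i²` and `θ† = θ* + T⁻¹ [J]`,
`Var(θ̂_n) = (2 (θ†)²/n) (1 − ([J]/(T θ†))²) + O(n^{-2})`. -/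
theorem mle_sandwich_variance
    {Ω : Type*} [MeasurableSpace Ω] (P : Measure Ω) [IsProbabilityMeasure P]
    (T βs θs : ℝ) (hT : 0 < T) (hθs : 0 < θs)
    (K : ℕ) (c : Fin K → ℝ) (hc : ∀ k, c k ≠ 0)
    (D : (n : ℕ) → Fin n → Ω → ℝ) (hDmeas : ∀ n i, Measurable (D n i))
    (μf : (n : ℕ) → Fin n → ℝ)
    (hjump : ∀ n, K < n → ∃ jdx : Fin K → Fin n, Function.Injective jdx ∧
      (∀ k, μf n (jdx k) = c k) ∧ ∀ i, i ∉ Set.range jdx → μf n i = 0)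
    (hindep : ∀ n, K < n → iIndepFun (D n) P)
    (hdist : ∀ n, K < n → ∀ i : Fin n,
      P.map (D n i) = gaussianReal (βs * (T / n) + μf n i) (Real.toNNReal (θs * (T / n)))) :
    ∃ (C : ℝ) (N : ℕ), ∀ n ≥ N,
      |variance (fun ω => T⁻¹ * ∑ i, (D n i ω) ^ 2) P
          - (2 * (θs + T⁻¹ * ∑ k, (c k) ^ 2) ^ 2 / n)
            * (1 - ((∑ k, (c k) ^ 2) / (T * (θs + T⁻¹ * ∑ k, (c k) ^ 2))) ^ 2)|
        ≤ C / (n : ℝ) ^ 2 := by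
  classical
  set J : ℝ := ∑ k, (c k) ^ 2 with hJdef
  set S1 : ℝ := ∑ k, c k with hS1def
  have hJ0 : 0 ≤ J := Finset.sum_nonneg fun k _ => sq_nonneg _
  have hθd : 0 < θs + T⁻¹ * J := by positivity
  refine ⟨|4*θs*βs^2*T + 8*θs*βs*S1|, K + 1, fun n hn => ?_⟩
  have hKn : K < n := hn
  have hn0 : 0 < n := Nat.lt_of_lt_of_le (Nat.succ_pos K) hn
  have hnR : (0:ℝ) < n := by exact_mod_cast hn0
  have hΔpos : (0:ℝ) < T / n := div_pos hT hnR
  have hvpos : (0:ℝ) < θs * (T / n) := mul_pos hθs hΔpos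
  have hv : (θs * (T / (n:ℝ))).toNNReal ≠ 0 :=
    ne_of_gt (Real.toNNReal_pos.mpr hvpos)
  have hvcoe : (((θs * (T / (n:ℝ))).toNNReal : ℝ≥0) : ℝ) = θs * (T / n) :=
    Real.coe_toNNReal _ hvpos.le
  obtain ⟨jdx, hinj, hjc, hj0⟩ := hjump n hKn
  -- variance of the scaled sum
  have hfun : (fun ω => T⁻¹ * ∑ i, (D n i ω) ^ 2)
      = T⁻¹ • (∑ i : Fin n, (fun ω => (D n i ω) ^ 2)) := by
    funext ω; simp [Finset.sum_apply]
  have hmem : ∀ i ∈ (Finset.univ : Finset (Fin n)),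
      MemLp (fun ω => (D n i ω) ^ 2) 2 P :=
    fun i _ => memℒp_comp_sq P (hDmeas n i) hv (hdist n hKn i)
  have hpair : Set.Pairwise ↑(Finset.univ : Finset (Fin n))
      (fun i j => IndepFun (fun ω => (D n i ω) ^ 2) (fun ω => (D n j ω) ^ 2) P) := by
    intro i _ j _ hij
    exact ((hindep n hKn).indepFun hij).comp
      (measurable_id.pow_const 2) (measurable_id.pow_const 2)
  have hvar : ∀ i : Fin n, variance (fun ω => (D n i ω) ^ 2) P
      = 2*(θs * (T/n))^2 + 4*(βs * (T / n) + μf n i)^2*(θs * (T/n)) := by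
    intro i
    rw [variance_comp_sq P (hDmeas n i) hv (hdist n hKn i), hvcoe]
  have hV : variance (fun ω => T⁻¹ * ∑ i, (D n i ω) ^ 2) P
      = T⁻¹ ^ 2 * ∑ i : Fin n,
          (2*(θs * (T/n))^2 + 4*(βs * (T / n) + μf n i)^2*(θs * (T/n))) := by
    rw [hfun, variance_smul, IndepFun.variance_sum hmem hpair]
    congr 1
    exact Finset.sum_congr rfl fun i _ => hvar i
  -- compute the sum
  have h1 : ∑ i : Fin n, μf n i = S1 :=
    sum_jump jdx hinj (μf n) c hjc hj0 (fun x => x) rfl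
  have h2 : ∑ i : Fin n, (μf n i) ^ 2 = J :=
    sum_jump jdx hinj (μf n) c hjc hj0 (fun x => x ^ 2) (by norm_num)
  have hsum : ∑ i : Fin n,
      (2*(θs * (T/n))^2 + 4*(βs * (T / n) + μf n i)^2*(θs * (T/n)))
      = n * (2*(θs * (T/n))^2 + 4*(βs * (T/n))^2*(θs * (T/n)))
        + (8*(βs * (T/n))*(θs * (T/n))) * S1 + (4*(θs * (T/n))) * J := by
    rw [← h1, ← h2, Finset.mul_sum, Finset.mul_sum]
    rw [show (n : ℝ) * (2*(θs * (T/n))^2 + 4*(βs * (T/n))^2*(θs * (T/n)))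
        = ∑ _i : Fin n, (2*(θs * (T/n))^2 + 4*(βs * (T/n))^2*(θs * (T/n))) by
      rw [Finset.sum_const, Finset.card_univ, Fintype.card_fin, nsmul_eq_mul]]
    rw [← Finset.sum_add_distrib, ← Finset.sum_add_distrib]
    exact Finset.sum_congr rfl fun i _ => by ring
  rw [hV, hsum]
  have hTne : T ≠ 0 := ne_of_gt hT
  have hnne : (n:ℝ) ≠ 0 := ne_of_gt hnR
  have hθdne : θs + T⁻¹ * J ≠ 0 := ne_of_gt hθd
  have key : T⁻¹ ^ 2 * ((n : ℝ) * (2*(θs * (T/n))^2 + 4*(βs * (T/n))^2*(θs * (T/n)))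
        + (8*(βs * (T/n))*(θs * (T/n))) * S1 + (4*(θs * (T/n))) * J)
      - (2 * (θs + T⁻¹ * J) ^ 2 / n) * (1 - (J / (T * (θs + T⁻¹ * J))) ^ 2)
      = (4*θs*βs^2*T + 8*θs*βs*S1) / (n:ℝ)^2 := by
    field_simp
    ring
  rw [key, abs_div, abs_of_pos (by positivity : (0:ℝ) < (n:ℝ)^2)]
end

section
/- (Truncated second-moment bound for no-jump increments.) Fix T > 0, β ∈ ℝ, θ > 0, m > 0, and ω ∈ (0, 1/2). For each n ≥ 1 let Z_n ~ N(β T/n, θ T/n) and η_n = m n^{-ω}. Then for every k ∈ ℕ, n^k · E[ Z_n² · 1(|Z_n| > η_n) ] → 0 as n → ∞. In particular, the total contribution of the n − K no-jump increments satisfies Σ_{i ∉ {J}} E[Z_i² 1(|Z_i| > η_n)] = o(n^{-1/2}). -/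
open MeasureTheory ProbabilityTheory Filter Real
open scoped NNReal

lemma integrable_abs_pow_exp (i : ℕ) :
    Integrable (fun x : ℝ => |x| ^ i * rexp (-(1/2) * x ^ 2)) := by
  have h0 := (integrable_rpow_mul_exp_neg_mul_sq (by norm_num : (0:ℝ) < 1/2)
    (s := (i : ℝ)) (by have : (0:ℝ) ≤ i := Nat.cast_nonneg i; linarith)).abs
  simp only [Real.rpow_natCast, abs_mul, abs_pow, abs_of_nonneg (Real.exp_pos _).le] at h0
  exact h0

lemma integrable_abs_pow_std (i : ℕ) :
    Integrable (fun y : ℝ => |y| ^ i) (gaussianReal 0 1) := by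
  rw [gaussianReal_of_var_ne_zero _ one_ne_zero,
    integrable_withDensity_iff (measurable_gaussianPDF 0 1)
      (ae_of_all _ fun x => ENNReal.ofReal_lt_top)]
  have h : (fun x : ℝ => |x| ^ i * (gaussianPDF 0 1 x).toReal)
      = fun x => (Real.sqrt (2 * π))⁻¹ * (|x| ^ i * rexp (-(1/2) * x ^ 2)) := by
    funext x
    rw [gaussianPDF, ENNReal.toReal_ofReal (gaussianPDFReal_nonneg _ _ _), gaussianPDFReal]
    push_cast
    ring_nf
  rw [h]
  exact (integrable_abs_pow_exp i).const_mul _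

lemma integrable_one_add_abs_pow_std (q : ℕ) :
    Integrable (fun y : ℝ => (|y| + 1) ^ q) (gaussianReal 0 1) := by
  have h : (fun y : ℝ => (|y| + 1) ^ q)
      = fun y => ∑ i ∈ Finset.range (q + 1), |y| ^ i * (q.choose i : ℝ) := by
    funext y
    rw [add_pow]
    simp
  rw [h]
  exact integrable_finset_sum _ fun i _ => (integrable_abs_pow_std i).mul_const _

lemma gauss_eq_map (μ : ℝ) (v : ℝ≥0) :
    gaussianReal μ v = (gaussianReal 0 1).map (fun y => Real.sqrt v * y + μ) := by
  have h2 : (NNReal.mk ((Real.sqrt v) ^ 2) (sq_nonneg _) * 1 : ℝ≥0) = v := by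
    rw [mul_one]
    ext
    exact Real.sq_sqrt v.coe_nonneg
  have h1 : (gaussianReal 0 1).map (fun y => Real.sqrt v * y) = gaussianReal 0 v := by
    have := gaussianReal_map_const_mul (μ := 0) (v := 1) (Real.sqrt v)
    rw [mul_zero, h2] at this
    exact this
  have h3 := gaussianReal_map_add_const (μ := 0) (v := v) μ
  rw [← h1, Measure.map_map (measurable_add_const μ) (measurable_const_mul _),
    zero_add] at h3
  exact h3.symm

lemma affine_abs_pow_le {c : ℝ} (μ : ℝ) (hc : 0 ≤ c) (j : ℕ) (y : ℝ) :
    |c * y + μ| ^ j ≤ (c + |μ|) ^ j * (|y| + 1) ^ j := by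
  rw [← mul_pow]
  apply pow_le_pow_left₀ (abs_nonneg _)
  calc |c * y + μ| ≤ |c * y| + |μ| := abs_add_le _ _
    _ = c * |y| + |μ| := by rw [abs_mul, abs_of_nonneg hc]
    _ ≤ (c + |μ|) * (|y| + 1) := by nlinarith [abs_nonneg y, abs_nonneg μ]

lemma integrable_pow_gauss (μ : ℝ) (v : ℝ≥0) (j : ℕ) :
    Integrable (fun x : ℝ => x ^ j) (gaussianReal μ v) := by
  rw [gauss_eq_map μ v,
    integrable_map_measure (continuous_pow j).aestronglyMeasurable
      ((measurable_const_mul _).add_const μ).aemeasurable]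
  refine ((integrable_one_add_abs_pow_std j).const_mul
    ((Real.sqrt v + |μ|) ^ j)).mono'
    (((measurable_const_mul _).add_const μ).pow_const j).aestronglyMeasurable
    (ae_of_all _ fun y => ?_)
  simp only [Function.comp]
  rw [Real.norm_eq_abs, abs_pow]
  exact affine_abs_pow_le μ (Real.sqrt_nonneg _) j y

lemma integral_pow_gauss_le (μ : ℝ) (v : ℝ≥0) (j : ℕ) :
    ∫ x, x ^ j ∂(gaussianReal μ v)
      ≤ (Real.sqrt v + |μ|) ^ j * ∫ y, (|y| + 1) ^ j ∂(gaussianReal 0 1) := by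
  rw [gauss_eq_map μ v,
    integral_map ((measurable_const_mul _).add_const μ).aemeasurable
      (continuous_pow j).aestronglyMeasurable, ← integral_const_mul]
  refine integral_mono ?_ ((integrable_one_add_abs_pow_std j).const_mul _) fun y => ?_
  · have := integrable_pow_gauss μ v j
    rw [gauss_eq_map μ v,
      integrable_map_measure (continuous_pow j).aestronglyMeasurable
        ((measurable_const_mul _).add_const μ).aemeasurable] at this
    exact this
  · calc (Real.sqrt v * y + μ) ^ j ≤ |(Real.sqrt v * y + μ)| ^ j := by
          rw [← abs_pow]; exact le_abs_self _
      _ ≤ _ := affine_abs_pow_le μ (Real.sqrt_nonneg _) j y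

lemma even_pow_nonneg (p : ℕ) (x : ℝ) : 0 ≤ x ^ (2 * p) := by
  rw [pow_mul]; exact pow_nonneg (sq_nonneg x) _

lemma truncated_sq_le (μ : ℝ) (v : ℝ≥0) {η : ℝ} (hη : 0 < η) (p : ℕ) :
    ∫ x in {x : ℝ | η < |x|}, x ^ 2 ∂(gaussianReal μ v)
      ≤ η⁻¹ ^ (2 * p) * ((Real.sqrt v + |μ|) ^ (2 * (p + 1)) *
        ∫ y, (|y| + 1) ^ (2 * (p + 1)) ∂(gaussianReal 0 1)) := by
  have hS : MeasurableSet {x : ℝ | η < |x|} :=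
    (isOpen_lt continuous_const continuous_abs).measurableSet
  have hinv : (0:ℝ) ≤ η⁻¹ ^ (2 * p) := pow_nonneg (inv_nonneg.2 hη.le) _
  calc ∫ x in {x : ℝ | η < |x|}, x ^ 2 ∂(gaussianReal μ v)
      ≤ ∫ x in {x : ℝ | η < |x|}, η⁻¹ ^ (2 * p) * x ^ (2 * (p + 1))
          ∂(gaussianReal μ v) := by
        refine setIntegral_mono_on ((integrable_pow_gauss μ v 2).integrableOn)
          (((integrable_pow_gauss μ v (2 * (p + 1))).const_mul _).integrableOn)
          hS fun x hx => ?_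
        have hx' : η < |x| := hx
        have h1 : (1:ℝ) ≤ η⁻¹ * |x| := by
          rw [← inv_mul_cancel₀ hη.ne']
          exact mul_le_mul_of_nonneg_left hx'.le (inv_nonneg.2 hη.le)
        have h2 : (1:ℝ) ≤ (η⁻¹ * |x|) ^ (2 * p) := one_le_pow₀ h1
        have h3 : |x| ^ (2 * p) = x ^ (2 * p) := by
          rw [pow_abs, abs_of_nonneg (even_pow_nonneg p x)]
        calc x ^ 2 = 1 * x ^ 2 := (one_mul _).symm
          _ ≤ (η⁻¹ * |x|) ^ (2 * p) * x ^ 2 :=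
              mul_le_mul_of_nonneg_right h2 (sq_nonneg x)
          _ = η⁻¹ ^ (2 * p) * x ^ (2 * (p + 1)) := by
              rw [mul_pow, h3]; ring
    _ ≤ ∫ x, η⁻¹ ^ (2 * p) * x ^ (2 * (p + 1)) ∂(gaussianReal μ v) := by
        refine setIntegral_le_integral
          ((integrable_pow_gauss μ v (2 * (p + 1))).const_mul _)
          (ae_of_all _ fun x => ?_)
        exact mul_nonneg hinv (even_pow_nonneg (p + 1) x)
    _ = η⁻¹ ^ (2 * p) * ∫ x, x ^ (2 * (p + 1)) ∂(gaussianReal μ v) :=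
        integral_const_mul _ _
    _ ≤ _ := mul_le_mul_of_nonneg_left (integral_pow_gauss_le μ v _) hinv

/-- **Truncated second-moment bound for no-jump increments.**
For `Z_n ~ N(β T/n, θ T/n)` and threshold `η_n = m n^{-w}` with `0 < w < 1/2`,
`E[Z_n² 1(|Z_n| > η_n)]` vanishes faster than any polynomial rate: for every `k`,
`n^k E[Z_n² 1(|Z_n| > η_n)] → 0`.  In particular the total contribution of the
`n − K` no-jump increments is `o(n^{-1/2})`. -/
theorem no_jump_truncated_second_moment
    (T β θ m w : ℝ) (hT : 0 < T) (hθ : 0 < θ) (hm : 0 < m)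
    (hw : w ∈ Set.Ioo (0 : ℝ) (1 / 2)) :
    (∀ k : ℕ, Tendsto (fun n : ℕ => (n : ℝ) ^ k *
        ∫ x in {x : ℝ | m * (n : ℝ) ^ (-w) < |x|}, x ^ 2
          ∂(gaussianReal (β * T / n) (Real.toNNReal (θ * T / n))))
      atTop (nhds 0)) ∧
    ∀ K : ℕ, Tendsto (fun n : ℕ => Real.sqrt n * (((n : ℝ) - K) *
        ∫ x in {x : ℝ | m * (n : ℝ) ^ (-w) < |x|}, x ^ 2
          ∂(gaussianReal (β * T / n) (Real.toNNReal (θ * T / n)))))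
      atTop (nhds 0) := by
  obtain ⟨hw1, hw2⟩ := hw
  set I : ℕ → ℝ := fun n =>
    ∫ x in {x : ℝ | m * (n : ℝ) ^ (-w) < |x|}, x ^ 2
      ∂(gaussianReal (β * T / n) (Real.toNNReal (θ * T / n))) with hI
  have hI0 : ∀ n, 0 ≤ I n := fun n =>
    setIntegral_nonneg (isOpen_lt continuous_const continuous_abs).measurableSet
      fun x _ => sq_nonneg x
  have part1 : ∀ k : ℕ, Tendsto (fun n : ℕ => (n : ℝ) ^ k * I n) atTop (nhds 0) := by
    intro k
    obtain ⟨p, hp⟩ := exists_nat_gt ((k : ℝ) / (1 - 2 * w))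
    have h12 : (0:ℝ) < 1 - 2 * w := by linarith
    have hr : (k : ℝ) + w * (2 * p) - ((p : ℝ) + 1) < 0 := by
      have h := (div_lt_iff₀ h12).mp hp
      nlinarith
    set r : ℝ := (k : ℝ) + w * (2 * p) - ((p : ℝ) + 1) with hrdef
    set C : ℝ := Real.sqrt (θ * T) + |β * T| with hCdef
    set M : ℝ := ∫ y, (|y| + 1) ^ (2 * (p + 1)) ∂(gaussianReal 0 1) with hMdef
    have hM0 : 0 ≤ M := integral_nonneg fun y => by positivity
    have hC0 : 0 ≤ C := by positivity
    set A : ℝ := m⁻¹ ^ (2 * p) * C ^ (2 * (p + 1)) * M with hAdef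
    have hub : ∀ᶠ n : ℕ in atTop, (n : ℝ) ^ k * I n ≤ A * (n : ℝ) ^ r := by
      filter_upwards [eventually_ge_atTop 1] with n hn
      have hx0 : (0:ℝ) < (n : ℝ) := by exact_mod_cast Nat.lt_of_lt_of_le Nat.zero_lt_one hn
      have hx1 : (1:ℝ) ≤ (n : ℝ) := by exact_mod_cast hn
      set X : ℝ := (n : ℝ) with hXdef
      have hη : 0 < m * X ^ (-w) := mul_pos hm (rpow_pos_of_pos hx0 _)
      have hv : ((θ * T / X).toNNReal : ℝ) = θ * T / X :=
        Real.coe_toNNReal _ (by positivity)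
      have key := truncated_sq_le (β * T / X) ((θ * T / X).toNNReal) hη p
      rw [hv] at key
      -- bound on the inverse-threshold factor
      have hinv_eq : (m * X ^ (-w))⁻¹ ^ (2 * p) = m⁻¹ ^ (2 * p) * X ^ (w * (2 * (p:ℝ))) := by
        rw [mul_inv, ← rpow_neg hx0.le, neg_neg, mul_pow,
          ← rpow_natCast (X ^ w) (2 * p), ← rpow_mul hx0.le]
        push_cast
        ring_nf
      -- bound on the mean/σ factor
      have hsqX : (0:ℝ) < Real.sqrt X := Real.sqrt_pos.2 hx0
      have hsum_le : Real.sqrt (θ * T / X) + |β * T / X| ≤ C / Real.sqrt X := by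
        have e1 : Real.sqrt (θ * T / X) = Real.sqrt (θ * T) / Real.sqrt X :=
          Real.sqrt_div (by positivity) _
        have e2 : |β * T / X| = |β * T| / X := by
          rw [abs_div, abs_of_pos hx0]
        have e3 : Real.sqrt X ≤ X := by
          nlinarith [Real.sq_sqrt hx0.le, Real.sqrt_nonneg X]
        have e4 : |β * T| / X ≤ |β * T| / Real.sqrt X :=
          div_le_div_of_nonneg_left (abs_nonneg _) hsqX e3
        rw [e1, e2, hCdef, add_div]
        exact add_le_add le_rfl e4
      have hpow_le : (Real.sqrt (θ * T / X) + |β * T / X|) ^ (2 * (p + 1))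
          ≤ C ^ (2 * (p + 1)) / X ^ (p + 1) := by
        calc (Real.sqrt (θ * T / X) + |β * T / X|) ^ (2 * (p + 1))
            ≤ (C / Real.sqrt X) ^ (2 * (p + 1)) :=
              pow_le_pow_left₀ (by positivity) hsum_le _
          _ = C ^ (2 * (p + 1)) / X ^ (p + 1) := by
              rw [div_pow]
              congr 1
              rw [pow_mul, Real.sq_sqrt hx0.le]
      have key2 : I n ≤ m⁻¹ ^ (2 * p) * X ^ (w * (2 * (p:ℝ))) *
          (C ^ (2 * (p + 1)) / X ^ (p + 1) * M) := by
        refine key.trans ?_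
        rw [hinv_eq]
        refine mul_le_mul_of_nonneg_left ?_
          (mul_nonneg (pow_nonneg (inv_nonneg.2 hm.le) _) (Real.rpow_nonneg hx0.le _))
        exact mul_le_mul_of_nonneg_right hpow_le hM0
      calc X ^ k * I n
          ≤ X ^ k * (m⁻¹ ^ (2 * p) * X ^ (w * (2 * (p:ℝ))) *
              (C ^ (2 * (p + 1)) / X ^ (p + 1) * M)) :=
            mul_le_mul_of_nonneg_left key2 (pow_nonneg hx0.le k)
        _ = A * (X ^ ((k:ℝ)) * X ^ (w * (2 * (p:ℝ))) * X ^ (-((p:ℝ) + 1))) := by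
            rw [← rpow_natCast X k]
            have e5 : X ^ (-((p:ℝ) + 1)) = (X ^ (p + 1 : ℕ))⁻¹ := by
              rw [← rpow_natCast X (p + 1), ← rpow_neg hx0.le]
              push_cast; ring_nf
            rw [e5, hAdef]
            field_simp
        _ = A * X ^ r := by
            rw [← rpow_add hx0, ← rpow_add hx0, hrdef, sub_eq_add_neg]
    have hAr : Tendsto (fun n : ℕ => A * (n : ℝ) ^ r) atTop (nhds 0) := by
      have h1 : Tendsto (fun x : ℝ => x ^ r) atTop (nhds 0) := by
        have h := tendsto_rpow_neg_atTop (show (0:ℝ) < -r by linarith)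
        simpa using h
      have h2 := (h1.comp tendsto_natCast_atTop_atTop).const_mul A
      simpa using h2
    refine tendsto_of_tendsto_of_tendsto_of_le_of_le' tendsto_const_nhds hAr ?_ hub
    exact Eventually.of_forall fun n => mul_nonneg (pow_nonneg (Nat.cast_nonneg n) _) (hI0 n)
  refine ⟨part1, fun K => ?_⟩
  have h2 := part1 2
  refine tendsto_of_tendsto_of_tendsto_of_le_of_le' tendsto_const_nhds h2 ?_ ?_
  · filter_upwards [eventually_ge_atTop (K + 1)] with n hn
    have hK : (K : ℝ) ≤ (n : ℝ) := by exact_mod_cast Nat.le_of_succ_le hn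
    exact mul_nonneg (Real.sqrt_nonneg _)
      (mul_nonneg (by linarith) (hI0 n))
  · filter_upwards [eventually_ge_atTop (K + 1), eventually_ge_atTop 1] with n hn hn1
    have hx1 : (1:ℝ) ≤ (n : ℝ) := by exact_mod_cast hn1
    have hx0 : (0:ℝ) < (n : ℝ) := by linarith
    have hK : (K : ℝ) ≤ (n : ℝ) := by exact_mod_cast Nat.le_of_succ_le hn
    have e3 : Real.sqrt (n : ℝ) ≤ (n : ℝ) := by
      nlinarith [Real.sq_sqrt hx0.le, Real.sqrt_nonneg (n : ℝ)]
    have h4 : Real.sqrt (n : ℝ) * ((n : ℝ) - K) ≤ (n : ℝ) * (n : ℝ) :=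
      mul_le_mul e3 (by linarith) (by linarith) hx0.le
    calc Real.sqrt (n : ℝ) * (((n : ℝ) - K) * I n)
        = (Real.sqrt (n : ℝ) * ((n : ℝ) - K)) * I n := by ring
      _ ≤ ((n : ℝ) * (n : ℝ)) * I n := mul_le_mul_of_nonneg_right h4 (hI0 n)
      _ = (n : ℝ) ^ 2 * I n := by ring
end

section
/- (Small-ball bound for jump increments.) Fix T > 0, β ∈ ℝ, θ > 0, m > 0, ω ∈ (0, 1/2), and a fixed c ≠ 0. For each n ≥ 1 let Z_n ~ N(β T/n, θ T/n) and η_n = m n^{-ω}. Then for every k ∈ ℕ, n^k · P( |Z_n + c| ≤ η_n ) → 0 as n → ∞; i.e., the probability that an increment containing a jump of size c falls below the threshold vanishes faster than any polynomial rate. -/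
open MeasureTheory ProbabilityTheory Filter Real
open scoped NNReal ENNReal

/-- **Small-ball bound for jump increments.**
For `Z_n ~ N(β T/n, θ T/n)`, a fixed jump size `c ≠ 0`, and threshold `η_n = m n^{-w}`
with `0 < w < 1/2`, the probability `P(|Z_n + c| ≤ η_n)` that an increment containing a
jump falls below the threshold vanishes faster than any polynomial rate. -/
theorem jump_increment_small_ball
    (T β θ m w : ℝ) (hT : 0 < T) (hθ : 0 < θ) (hm : 0 < m)
    (hw : w ∈ Set.Ioo (0 : ℝ) (1 / 2)) (c : ℝ) (hc : c ≠ 0) :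
    ∀ k : ℕ, Tendsto (fun n : ℕ => (n : ℝ) ^ k *
        ((gaussianReal (β * T / n) (Real.toNNReal (θ * T / n)))
          {x : ℝ | |x + c| ≤ m * (n : ℝ) ^ (-w)}).toReal)
      atTop (nhds 0) := by
  obtain ⟨hw0, hw2⟩ := hw
  intro k
  have hθT : 0 < θ * T := mul_pos hθ hT
  set a : ℝ := c ^ 2 / (8 * (θ * T)) with ha_def
  have ha : 0 < a := by positivity
  have hcpos : 0 < |c| := abs_pos.mpr hc
  set D : ℝ := 2 * m / Real.sqrt (2 * π * (θ * T)) with hD_def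
  have hsqrtpos : 0 < Real.sqrt (2 * π * (θ * T)) := Real.sqrt_pos.mpr (by positivity)
  have hD : 0 ≤ D := by positivity
  -- the dominating sequence tends to 0
  have htends : Tendsto (fun n : ℕ => D * ((n : ℝ) ^ ((k : ℝ) + 1) * Real.exp (-a * n)))
      atTop (nhds 0) := by
    have h := (tendsto_rpow_mul_exp_neg_mul_atTop_nhds_zero ((k : ℝ) + 1) a ha).comp
      tendsto_natCast_atTop_atTop
    simpa using (h.const_mul D).congr (fun n => by simp [Function.comp])
  -- eventual smallness of threshold + mean
  have hsmall : Tendsto (fun n : ℕ => m * (n : ℝ) ^ (-w) + |β * T / n|) atTop (nhds 0) := by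
    have h1 : Tendsto (fun n : ℕ => m * (n : ℝ) ^ (-w)) atTop (nhds 0) := by
      simpa using ((tendsto_rpow_neg_atTop hw0).comp tendsto_natCast_atTop_atTop).const_mul m
    have h2 : Tendsto (fun n : ℕ => |β * T / n|) atTop (nhds 0) := by
      have := (tendsto_const_div_atTop_nhds_zero_nat (β * T))
      simpa using this.abs
    simpa using h1.add h2
  refine squeeze_zero' ?_ ?_ htends
  · filter_upwards [] with n
    have : (0:ℝ) ≤ (n : ℝ) ^ k := by positivity
    exact mul_nonneg this ENNReal.toReal_nonneg
  filter_upwards [hsmall.eventually (gt_mem_nhds (by positivity : (0:ℝ) < |c| / 2)),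
    eventually_ge_atTop 1] with n hn hn1
  have hn1' : (1:ℝ) ≤ (n : ℝ) := by exact_mod_cast hn1
  have hnpos : (0:ℝ) < n := by linarith
  -- notation
  set η : ℝ := m * (n : ℝ) ^ (-w) with hη_def
  have hη : 0 < η := by positivity
  set μ : ℝ := β * T / n with hμ_def
  set v : ℝ≥0 := Real.toNNReal (θ * T / n) with hv_def
  have hvR : (v : ℝ) = θ * T / n := Real.coe_toNNReal _ (by positivity)
  have hvpos : (0:ℝ) < v := by rw [hvR]; positivity
  have hv0 : v ≠ 0 := by
    intro h; rw [h] at hvpos; simp at hvpos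
  -- the set is a closed ball
  have hset : {x : ℝ | |x + c| ≤ η} = Metric.closedBall (-c) η := by
    ext x
    simp [Metric.mem_closedBall, Real.dist_eq, sub_neg_eq_add]
  -- pointwise density bound on the set
  set B : ℝ := (Real.sqrt (2 * π * v))⁻¹ * Real.exp (-a * n) with hB_def
  have hB0 : 0 ≤ B := by positivity
  have hpdf : ∀ x ∈ Metric.closedBall (-c) η, gaussianPDFReal μ v x ≤ B := by
    intro x hx
    rw [Metric.mem_closedBall, Real.dist_eq, sub_neg_eq_add] at hx
    have hxm : |c| / 2 ≤ |x - μ| := by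
      have hce : c = (x + c) - (x - μ) + (-μ) := by ring
      have h1 : |c| ≤ |x + c| + |x - μ| + |μ| := by
        calc |c| = |(x + c) - (x - μ) + (-μ)| := by rw [← hce]
          _ ≤ |(x + c) - (x - μ)| + |(-μ)| := abs_add_le _ _
          _ ≤ |x + c| + |x - μ| + |μ| := by
              have := abs_sub (x + c) (x - μ)
              rw [abs_neg]
              linarith
      linarith
    have hsq : c ^ 2 / 4 ≤ (x - μ) ^ 2 := by
      have h2 : (|c| / 2) ^ 2 ≤ |x - μ| ^ 2 :=
        pow_le_pow_left₀ (by positivity) hxm 2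
      rw [sq_abs] at h2
      calc c ^ 2 / 4 = (|c| / 2) ^ 2 := by rw [div_pow, sq_abs]; norm_num
        _ ≤ (x - μ) ^ 2 := h2
    have hexp : -(x - μ) ^ 2 / (2 * (v : ℝ)) ≤ -a * n := by
      rw [hvR]
      have hrw : (c ^ 2 / 4) / (2 * (θ * T / n)) = a * n := by
        field_simp [ha_def]; rw [ha_def]; field_simp; norm_num
      have hdenpos : (0:ℝ) < 2 * (θ * T / n) := by positivity
      have h3 : (c ^ 2 / 4) / (2 * (θ * T / n)) ≤ (x - μ) ^ 2 / (2 * (θ * T / n)) := by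
        gcongr
      rw [hrw] at h3
      have : -((x - μ) ^ 2 / (2 * (θ * T / n))) ≤ -(a * n) := by linarith
      calc -(x - μ) ^ 2 / (2 * (θ * T / n)) = -((x - μ) ^ 2 / (2 * (θ * T / n))) := by ring
        _ ≤ -(a * n) := this
        _ = -a * n := by ring
    calc gaussianPDFReal μ v x
        = (Real.sqrt (2 * π * v))⁻¹ * Real.exp (-(x - μ) ^ 2 / (2 * (v : ℝ))) := rfl
      _ ≤ B := by
          rw [hB_def]
          gcongr
  -- measure bound
  have hmeas : ((gaussianReal μ v) {x : ℝ | |x + c| ≤ η}).toReal ≤ B * (2 * η) := by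
    have h1 : (gaussianReal μ v) {x : ℝ | |x + c| ≤ η}
        ≤ ENNReal.ofReal B * ENNReal.ofReal (2 * η) := by
      rw [gaussianReal_apply μ hv0, hset]
      calc ∫⁻ x in Metric.closedBall (-c) η, gaussianPDF μ v x
          ≤ ∫⁻ _ in Metric.closedBall (-c) η, ENNReal.ofReal B := by
            refine setLIntegral_mono (by measurability) ?_
            intro x hx
            exact ENNReal.ofReal_le_ofReal (hpdf x hx)
        _ = ENNReal.ofReal B * volume (Metric.closedBall (-c) η) := setLIntegral_const _ _
        _ = ENNReal.ofReal B * ENNReal.ofReal (2 * η) := by rw [Real.volume_closedBall]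
    calc ((gaussianReal μ v) {x : ℝ | |x + c| ≤ η}).toReal
        ≤ (ENNReal.ofReal B * ENNReal.ofReal (2 * η)).toReal :=
          ENNReal.toReal_mono (by finiteness) h1
      _ = B * (2 * η) := by
          rw [← ENNReal.ofReal_mul hB0, ENNReal.toReal_ofReal (by positivity)]
  -- final numeric bound
  have hsqrt_eq : Real.sqrt (2 * π * (v : ℝ)) = Real.sqrt (2 * π * (θ * T)) / Real.sqrt n := by
    rw [hvR, show 2 * π * (θ * T / n) = (2 * π * (θ * T)) / n by ring,
      Real.sqrt_div (by positivity)]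
  have hsn : Real.sqrt (n : ℝ) ≤ (n : ℝ) := by
    calc Real.sqrt (n : ℝ) ≤ Real.sqrt ((n : ℝ) ^ 2) := by
          apply Real.sqrt_le_sqrt; nlinarith
      _ = (n : ℝ) := by rw [Real.sqrt_sq (le_of_lt hnpos)]
  have hnw : (n : ℝ) ^ (-w) ≤ 1 :=
    Real.rpow_le_one_of_one_le_of_nonpos hn1' (by linarith)
  have hrpow : (n : ℝ) ^ ((k : ℝ) + 1) = (n : ℝ) ^ k * n := by
    rw [show ((k : ℝ) + 1) = ((k + 1 : ℕ) : ℝ) by push_cast; ring,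
      Real.rpow_natCast, pow_succ]
  have hBle : B ≤ (n : ℝ) / Real.sqrt (2 * π * (θ * T)) * Real.exp (-a * n) := by
    rw [hB_def, hsqrt_eq, inv_div]
    gcongr
  have hηle : 2 * η ≤ 2 * m := by
    rw [hη_def]
    have h4 : m * (n : ℝ) ^ (-w) ≤ m * 1 := mul_le_mul_of_nonneg_left hnw hm.le
    linarith
  have hkey : (n : ℝ) ^ k * (B * (2 * η)) ≤ D * ((n : ℝ) ^ ((k : ℝ) + 1) * Real.exp (-a * n)) := by
    calc (n : ℝ) ^ k * (B * (2 * η))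
        ≤ (n : ℝ) ^ k * (((n : ℝ) / Real.sqrt (2 * π * (θ * T)) * Real.exp (-a * n)) * (2 * m)) := by
          apply mul_le_mul_of_nonneg_left _ (by positivity)
          exact mul_le_mul hBle hηle (by positivity) (by positivity)
      _ = D * ((n : ℝ) ^ ((k : ℝ) + 1) * Real.exp (-a * n)) := by
          rw [hD_def, hrpow]
          field_simp
  calc (n : ℝ) ^ k * ((gaussianReal μ v) {x : ℝ | |x + c| ≤ η}).toReal
      ≤ (n : ℝ) ^ k * (B * (2 * η)) := by
        apply mul_le_mul_of_nonneg_left hmeas (by positivity)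
    _ ≤ D * ((n : ℝ) ^ ((k : ℝ) + 1) * Real.exp (-a * n)) := hkey
end
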